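/- Let μ ∈ (0,1) and λ₁, λ₂ ∈ ℝ with μ = |λ₁|/(|λ₁| + |λ₂|) (assuming λ₁, λ₂ not both zero), let M = diag(λ₁, λ₂), and let χ : ℝ → {0,1} be the 1-periodic extension of the characteristic function of (0, μ). Define Mₙ(x) = χ(nx)(λ₁/μ) e₁⊗e₁ + (1 − χ(nx))(λ₂/(1−μ)) e₂⊗e₂ for x in a bounded open interval I. Then det Mₙ(x) = 0 for all x and n, Mₙ converges to the constant M weakly-* in L^∞(I, ℝ^{2×2}_{sym}), and for a.e. x, |Mₙ(x)|² = λ₁²/μ + λ₂²/(1−μ) = |M|² + 2|det M|. -/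

import Mathlib

open MeasureTheory Set Filter Topology

section osc
variable {μ : ℝ} {χ : ℝ → ℝ} {w : ℕ → ℝ → ℝ} {a b : ℝ}

lemma chi_meas (hχ : ∀ x, χ x = if Int.fract x ∈ Set.Ioo 0 μ then 1 else 0) :
    Measurable χ := by
  have : χ = fun x => if Int.fract x ∈ Set.Ioo 0 μ then (1:ℝ) else 0 := funext hχ
  rw [this]
  exact Measurable.ite (measurable_fract measurableSet_Ioo) measurable_const measurable_const

lemma chi_mem (hχ : ∀ x, χ x = if Int.fract x ∈ Set.Ioo 0 μ then 1 else 0) (x : ℝ) :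
    χ x = 0 ∨ χ x = 1 := by
  rw [hχ]; split <;> simp

lemma chi_bound (hμ : μ ∈ Set.Ioo (0:ℝ) 1)
    (hχ : ∀ x, χ x = if Int.fract x ∈ Set.Ioo 0 μ then 1 else 0) (x : ℝ) :
    |χ x - μ| ≤ 1 := by
  rcases chi_mem hχ x with h | h <;> rw [h] <;> rw [abs_le] <;>
    constructor <;> nlinarith [hμ.1, hμ.2]

lemma chi_per (hχ : ∀ x, χ x = if Int.fract x ∈ Set.Ioo 0 μ then 1 else 0) :
    Function.Periodic χ 1 := fun x => by rw [hχ, hχ, Int.fract_add_one]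

lemma chi_intInt (hμ : μ ∈ Set.Ioo (0:ℝ) 1) (hmeas : Measurable χ)
    (hbd : ∀ x, |χ x - μ| ≤ 1) (c d : ℝ) :
    IntervalIntegrable (fun x => χ x - μ) volume c d := by
  rw [intervalIntegrable_iff]
  refine Integrable.mono' (g := fun _ => (1:ℝ)) ?_
    ((hmeas.sub measurable_const).aestronglyMeasurable) (ae_of_all _ ?_)
  · exact integrableOn_const measure_Ioc_lt_top.ne
  · intro x; simpa using hbd x

lemma chi_int01 (hμ : μ ∈ Set.Ioo (0:ℝ) 1)
    (hχ : ∀ x, χ x = if Int.fract x ∈ Set.Ioo 0 μ then 1 else 0) :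
    ∫ x in (0:ℝ)..1, χ x = μ := by
  rw [intervalIntegral.integral_of_le zero_le_one, integral_Ioc_eq_integral_Ioo]
  have h1 : ∀ x ∈ Set.Ioo (0:ℝ) 1, χ x = Set.indicator (Set.Ioo 0 μ) (fun _ => (1:ℝ)) x := by
    intro x hx
    rw [hχ, Int.fract_eq_self.2 ⟨hx.1.le, hx.2⟩]
    by_cases h : x ∈ Set.Ioo 0 μ <;> simp [h]
  rw [setIntegral_congr_fun measurableSet_Ioo h1,
    setIntegral_indicator measurableSet_Ioo]
  have : Set.Ioo 0 1 ∩ Set.Ioo 0 μ = Set.Ioo 0 μ := by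
    rw [Set.inter_eq_right]
    exact Set.Ioo_subset_Ioo le_rfl hμ.2.le
  rw [this]
  simp [Real.volume_Ioo, hμ.1.le]

lemma Gbd {h : ℝ → ℝ} (hper : Function.Periodic h 1)
    (hint : ∀ c d : ℝ, IntervalIntegrable h volume c d)
    (hbd : ∀ x, |h x| ≤ 1)
    (hzero : ∫ x in (0:ℝ)..1, h x = 0) (y : ℝ) :
    |∫ x in (0:ℝ)..y, h x| ≤ 1 := by
  set G : ℝ → ℝ := fun y => ∫ x in (0:ℝ)..y, h x with hG
  have hGper : Function.Periodic G 1 := by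
    intro t
    have : G (t + 1) - G t = ∫ x in t..(t+1), h x := by
      rw [hG]
      simp only
      rw [← intervalIntegral.integral_add_adjacent_intervals (hint 0 t) (hint t (t+1))]
      ring
    have h2 : ∫ x in t..(t+1), h x = ∫ x in (0:ℝ)..(0+1:ℝ), h x :=
      hper.intervalIntegral_add_eq t 0
    rw [h2] at this
    simp only [zero_add] at this
    rw [hzero] at this
    linarith
  have key : ∀ z ∈ Set.Icc (0:ℝ) 1, |G z| ≤ 1 := by
    intro z hz
    have := intervalIntegral.norm_integral_le_of_norm_le_const
      (a := 0) (b := z) (C := 1) (f := h) (fun x _ => by simpa using hbd x)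
    simp only [Real.norm_eq_abs] at this
    calc |G z| ≤ 1 * |z - 0| := this
    _ ≤ 1 := by rw [one_mul]; rw [abs_le]; constructor <;> [linarith [hz.1]; linarith [hz.2]]
  have heq : G y = G (Int.fract y) := by
    have h1 : G (Int.fract y + (⌊y⌋ : ℤ) * 1) = G (Int.fract y) :=
      (hGper.int_mul ⌊y⌋) (Int.fract y)
    have h2 : Int.fract y + (⌊y⌋ : ℤ) * 1 = y := by
      rw [mul_one, Int.fract]; ring
    rw [h2] at h1
    exact h1
  show |G y| ≤ 1
  rw [heq]
  exact key _ ⟨Int.fract_nonneg y, (Int.fract_lt_one y).le⟩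

lemma claimA {h : ℝ → ℝ} (hint : ∀ c d : ℝ, IntervalIntegrable h volume c d)
    (hGbd : ∀ y : ℝ, |∫ x in (0:ℝ)..y, h x| ≤ 1) (c d : ℝ) :
    Tendsto (fun n : ℕ => ∫ x in c..d, h (n * x)) atTop (𝓝 0) := by
  apply squeeze_zero_norm' (a := fun n : ℕ => 2 / n)
  · filter_upwards [eventually_ge_atTop 1] with n hn
    have hn0 : (n:ℝ) ≠ 0 := by positivity
    rw [intervalIntegral.integral_comp_mul_left _ hn0]
    have hadd : (∫ x in (0:ℝ)..(n*c), h x) + ∫ x in (n*c:ℝ)..(n*d), h x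
        = ∫ x in (0:ℝ)..(n*d), h x :=
      intervalIntegral.integral_add_adjacent_intervals (hint 0 (n*c)) (hint (n*c) (n*d))
    have : |∫ x in (n*c:ℝ)..(n*d), h x| ≤ 2 := by
      have h1 := hGbd (n*c)
      have h2 := hGbd (n*d)
      have : (∫ x in (n*c:ℝ)..(n*d), h x)
          = (∫ x in (0:ℝ)..(n*d), h x) - ∫ x in (0:ℝ)..(n*c), h x := by linarith
      rw [this]
      calc |(∫ x in (0:ℝ)..(n*d), h x) - ∫ x in (0:ℝ)..(n*c), h x|
          ≤ |∫ x in (0:ℝ)..(n*d), h x| + |∫ x in (0:ℝ)..(n*c), h x| := abs_sub _ _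
        _ ≤ 2 := by linarith
    rw [norm_smul]
    simp only [norm_inv, Real.norm_natCast, Real.norm_eq_abs]
    rw [div_eq_inv_mul, abs_of_nonneg (by positivity : (0:ℝ) ≤ (n:ℝ))]
    exact mul_le_mul le_rfl this (abs_nonneg _) (by positivity)
  · exact tendsto_const_div_atTop_nhds_zero_nat 2
lemma hbint (hwm : ∀ n, Measurable (w n)) (hwb : ∀ n x, |w n x| ≤ 1)
    (n : ℕ) {f : ℝ → ℝ} (hf : IntegrableOn f (Set.Ioo a b)) :
    Integrable (fun x => w n x * f x) (volume.restrict (Set.Ioo a b)) :=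
  hf.bdd_mul (c := 1) (hwm n).aestronglyMeasurable (ae_of_all _ fun x => by simpa using hwb n x)

lemma Lapprox (hwm : ∀ n, Measurable (w n)) (hwb : ∀ n x, |w n x| ≤ 1)
    {f : ℝ → ℝ} (hf : IntegrableOn f (Set.Ioo a b))
    (happ : ∀ ε > (0:ℝ), ∃ g : ℝ → ℝ, IntegrableOn g (Set.Ioo a b) ∧
      (∫ x in Set.Ioo a b, |f x - g x|) ≤ ε ∧
      Tendsto (fun n => ∫ x in Set.Ioo a b, w n x * g x) atTop (𝓝 0)) :
    Tendsto (fun n => ∫ x in Set.Ioo a b, w n x * f x) atTop (𝓝 0) := by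
  rw [NormedAddCommGroup.tendsto_nhds_zero]
  intro ε hε
  obtain ⟨g, hg, herr, hgtend⟩ := happ (ε/2) (by positivity)
  have hev : ∀ᶠ n in atTop, ‖∫ x in Set.Ioo a b, w n x * g x‖ < ε/2 := by
    rw [NormedAddCommGroup.tendsto_nhds_zero] at hgtend
    exact hgtend (ε/2) (by positivity)
  filter_upwards [hev] with n hn
  have hsplit : (∫ x in Set.Ioo a b, w n x * f x)
      = (∫ x in Set.Ioo a b, w n x * (f x - g x)) + ∫ x in Set.Ioo a b, w n x * g x := by
    rw [← integral_add]
    · congr 1; funext x; ring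
    · exact hbint hwm hwb n (hf.sub hg)
    · exact hbint hwm hwb n hg
  have hbound : ‖∫ x in Set.Ioo a b, w n x * (f x - g x)‖ ≤ ε/2 := by
    calc ‖∫ x in Set.Ioo a b, w n x * (f x - g x)‖
        ≤ ∫ x in Set.Ioo a b, ‖w n x * (f x - g x)‖ := norm_integral_le_integral_norm _
      _ ≤ ∫ x in Set.Ioo a b, |f x - g x| := by
          apply integral_mono_of_nonneg (ae_of_all _ fun x => norm_nonneg _)
            ((hf.sub hg).abs)
          refine ae_of_all _ fun x => ?_
          simp only [Pi.sub_apply, Real.norm_eq_abs, abs_mul]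
          calc |w n x| * |f x - g x| ≤ 1 * |f x - g x| :=
                mul_le_mul_of_nonneg_right (hwb n x) (abs_nonneg _)
            _ = |f x - g x| := one_mul _
      _ ≤ ε/2 := herr
  calc ‖∫ x in Set.Ioo a b, w n x * f x‖
      ≤ ‖∫ x in Set.Ioo a b, w n x * (f x - g x)‖ + ‖∫ x in Set.Ioo a b, w n x * g x‖ := by
        rw [hsplit]; exact norm_add_le _ _
    _ < ε/2 + ε/2 := by exact add_lt_add_of_le_of_lt hbound hn
    _ = ε := by ring

lemma Lind (hwm : ∀ n, Measurable (w n)) (hwb : ∀ n x, |w n x| ≤ 1)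
    (hbase : ∀ p q : ℝ, Tendsto
      (fun n => ∫ x in Set.Ioo a b, w n x * Set.indicator (Set.Ioo p q) (fun _ => (1:ℝ)) x)
      atTop (𝓝 0))
    (huniv : Tendsto (fun n => ∫ x in Set.Ioo a b, w n x) atTop (𝓝 0)) :
    ∀ ⦃s : Set ℝ⦄, MeasurableSet s → Tendsto
      (fun n => ∫ x in Set.Ioo a b, w n x * Set.indicator s (fun _ => (1:ℝ)) x)
      atTop (𝓝 0) := by
  haveI : IsFiniteMeasure (volume.restrict (Set.Ioo a b)) :=
    ⟨by rw [Measure.restrict_apply_univ]; exact measure_Ioo_lt_top⟩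
  have hindint : ∀ s : Set ℝ, MeasurableSet s →
      IntegrableOn (Set.indicator s (fun _ => (1:ℝ))) (Set.Ioo a b) := by
    intro s hs
    refine Integrable.mono' (integrable_const 1)
      ((measurable_const.indicator hs).aestronglyMeasurable) (ae_of_all _ fun x => ?_)
    by_cases h : x ∈ s <;> simp [h]
  refine MeasurableSpace.induction_on_inter
    (BorelSpace.measurable_eq.trans Real.borel_eq_generateFrom_Ioo_rat)
    Real.isPiSystem_Ioo_rat ?_ ?_ ?_ ?_
  · simp only [Set.indicator_empty, mul_zero, integral_zero]
    exact tendsto_const_nhds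
  · rintro t ht
    simp only [Set.mem_iUnion, Set.mem_singleton_iff] at ht
    obtain ⟨p, q, -, rfl⟩ := ht
    exact hbase p q
  · intro t ht hC
    have heq : ∀ n, (∫ x in Set.Ioo a b, w n x * Set.indicator tᶜ (fun _ => (1:ℝ)) x)
        = (∫ x in Set.Ioo a b, w n x)
          - ∫ x in Set.Ioo a b, w n x * Set.indicator t (fun _ => (1:ℝ)) x := by
      intro n
      rw [← integral_sub]
      · apply integral_congr_ae
        refine ae_of_all _ fun x => ?_
        by_cases h : x ∈ t <;> simp [h]
      · refine Integrable.mono' (integrable_const 1)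
          ((hwm n).aestronglyMeasurable) (ae_of_all _ fun x => by simpa using hwb n x)
      · exact hbint hwm hwb n (hindint t ht)
    simp only [heq]
    simpa using huniv.sub hC
  · intro g hdisj hgm hC
    set ν := volume.restrict (Set.Ioo a b)
    set A : ℕ → Set ℝ := fun k => ⋃ i ∈ Finset.range k, g i with hA
    have hAm : ∀ k, MeasurableSet (A k) := fun k =>
      (Finset.range k).measurableSet_biUnion (fun i _ => hgm i)
    have hAsub : ∀ k, A k ⊆ ⋃ i, g i := fun k =>
      Set.iUnion₂_subset fun i _ => Set.subset_iUnion g i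
    have hCA : ∀ k, Tendsto
        (fun n => ∫ x in Set.Ioo a b, w n x * Set.indicator (A k) (fun _ => (1:ℝ)) x)
        atTop (𝓝 0) := by
      intro k
      induction k with
      | zero =>
        simp only [hA, Finset.range_zero, Finset.notMem_empty, Set.iUnion_of_empty,
          Set.iUnion_false, Set.iUnion_empty, Set.indicator_empty, mul_zero, integral_zero]
        exact tendsto_const_nhds
      | succ k ih =>
        have hstep : A (k+1) = A k ∪ g k := by
          rw [hA]
          simp only [Finset.range_add_one]
          rw [Finset.set_biUnion_insert]
          exact Set.union_comm _ _
        have hdis : Disjoint (A k) (g k) := by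
          rw [Set.disjoint_left]
          rintro x hx hxk
          simp only [hA, Set.mem_iUnion, Finset.mem_range] at hx
          obtain ⟨i, hik, hxi⟩ := hx
          exact Set.disjoint_right.1 (hdisj (Nat.ne_of_lt hik)) hxk hxi
        have heq : ∀ n, (∫ x in Set.Ioo a b, w n x * Set.indicator (A (k+1)) (fun _ => (1:ℝ)) x)
            = (∫ x in Set.Ioo a b, w n x * Set.indicator (A k) (fun _ => (1:ℝ)) x)
              + ∫ x in Set.Ioo a b, w n x * Set.indicator (g k) (fun _ => (1:ℝ)) x := by
          intro n
          rw [← integral_add (hbint hwm hwb n (hindint _ (hAm k)))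
            (hbint hwm hwb n (hindint _ (hgm k)))]
          apply integral_congr_ae
          refine ae_of_all _ fun x => ?_
          rw [hstep, Set.indicator_union_of_disjoint hdis]
          ring
        simp only [heq]
        simpa using ih.add (hC k)
    -- approximation
    apply Lapprox hwm hwb (hindint _ (MeasurableSet.iUnion hgm))
    intro ε hε
    -- choose k with ν ((⋃ i, g i) \ A k) small
    have hmono : Monotone A := by
      intro i j hij
      apply Set.iUnion₂_subset
      intro i' hi'
      exact Set.subset_biUnion_of_mem
        (Finset.mem_range.2 (lt_of_lt_of_le (Finset.mem_range.1 hi') hij))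
    have hAU : ⋃ k, A k = ⋃ i, g i := by
      apply Set.Subset.antisymm (Set.iUnion_subset hAsub)
      intro x hx
      obtain ⟨i, hi⟩ := Set.mem_iUnion.1 hx
      exact Set.mem_iUnion.2 ⟨i+1, Set.mem_biUnion (Finset.self_mem_range_succ i) hi⟩
    have htend : Tendsto (fun k => ν (A k)) atTop (𝓝 (ν (⋃ i, g i))) := by
      rw [← hAU]
      exact tendsto_measure_iUnion_atTop hmono
    have hfin : ν (⋃ i, g i) ≠ ⊤ := measure_ne_top ν _
    have htoReal : Tendsto (fun k => (ν ((⋃ i, g i) \ A k)).toReal) atTop (𝓝 0) := by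
      have hdiff : ∀ k, ν ((⋃ i, g i) \ A k) = ν (⋃ i, g i) - ν (A k) := fun k =>
        measure_diff (hAsub k) (hAm k).nullMeasurableSet (measure_ne_top ν _)
      simp only [hdiff]
      have h1 : Tendsto (fun k => ν (⋃ i, g i) - ν (A k)) atTop
          (𝓝 (ν (⋃ i, g i) - ν (⋃ i, g i))) :=
        ENNReal.Tendsto.sub tendsto_const_nhds htend (Or.inl hfin)
      rw [tsub_self] at h1
      have h2 := (ENNReal.tendsto_toReal (a := 0) (by simp)).comp h1
      simpa [Function.comp_def] using h2
    obtain ⟨k, hk⟩ := (htoReal.eventually (gt_mem_nhds hε)).exists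
    refine ⟨Set.indicator (A k) (fun _ => (1:ℝ)), hindint _ (hAm k), ?_, hCA k⟩
    have hptw : ∀ x, |Set.indicator (⋃ i, g i) (fun _ => (1:ℝ)) x
        - Set.indicator (A k) (fun _ => (1:ℝ)) x|
        = Set.indicator ((⋃ i, g i) \ A k) (fun _ => (1:ℝ)) x := by
      intro x
      by_cases h1 : x ∈ A k
      · have h2 : x ∈ ⋃ i, g i := hAsub k h1
        simp [h1, h2, Set.indicator_of_notMem (fun (h : x ∈ (⋃ i, g i) \ A k) => h.2 h1)]
      · by_cases h2 : x ∈ ⋃ i, g i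
        · simp [h1, h2, Set.indicator_of_mem (Set.mem_diff_of_mem h2 h1)]
        · simp [h1, h2, Set.indicator_of_notMem (fun (h : x ∈ (⋃ i, g i) \ A k) => h2 h.1)]
    calc (∫ x in Set.Ioo a b, |Set.indicator (⋃ i, g i) (fun _ => (1:ℝ)) x
            - Set.indicator (A k) (fun _ => (1:ℝ)) x|)
        = ∫ x in Set.Ioo a b, Set.indicator ((⋃ i, g i) \ A k) (fun _ => (1:ℝ)) x :=
          integral_congr_ae (ae_of_all _ hptw)
      _ = (ν ((⋃ i, g i) \ A k)).toReal :=
          integral_indicator_one (((MeasurableSet.iUnion hgm)).diff (hAm k))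
      _ ≤ ε := hk.le

lemma Lgen (hwm : ∀ n, Measurable (w n)) (hwb : ∀ n x, |w n x| ≤ 1)
    (hbase : ∀ p q : ℝ, Tendsto
      (fun n => ∫ x in Set.Ioo a b, w n x * Set.indicator (Set.Ioo p q) (fun _ => (1:ℝ)) x)
      atTop (𝓝 0))
    (huniv : Tendsto (fun n => ∫ x in Set.Ioo a b, w n x) atTop (𝓝 0)) :
    ∀ ⦃f : ℝ → ℝ⦄, IntegrableOn f (Set.Ioo a b) →
      Tendsto (fun n => ∫ x in Set.Ioo a b, w n x * f x) atTop (𝓝 0) := by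
  set ν := volume.restrict (Set.Ioo a b) with hν
  have key := Integrable.induction (μ := ν) (E := ℝ)
    (P := fun f => Tendsto (fun n => ∫ x, w n x * f x ∂ν) atTop (𝓝 0)) ?_ ?_ ?_ ?_
  · exact fun f hf => key hf
  · -- indicators
    intro c s hs _
    have heq : (fun n => ∫ x, w n x * Set.indicator s (fun _ => c) x ∂ν)
        = fun n => c * ∫ x, w n x * Set.indicator s (fun _ => (1:ℝ)) x ∂ν := by
      funext n
      rw [← integral_const_mul]
      apply integral_congr_ae
      refine ae_of_all _ fun x => ?_
      by_cases h : x ∈ s <;> simp [h] <;> ring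
    rw [heq]
    simpa using (Lind hwm hwb hbase huniv hs).const_mul c
  · -- add
    intro f g _ hf hg hPf hPg
    have heq : (fun n => ∫ x, w n x * (f + g) x ∂ν)
        = fun n => (∫ x, w n x * f x ∂ν) + ∫ x, w n x * g x ∂ν := by
      funext n
      rw [← integral_add (hbint hwm hwb n hf) (hbint hwm hwb n hg)]
      apply integral_congr_ae
      refine ae_of_all _ fun x => ?_
      simp only [Pi.add_apply]
      ring
    rw [heq]
    simpa using hPf.add hPg
  · -- closed
    set_option synthInstance.maxHeartbeats 1000000 in
    apply IsSeqClosed.isClosed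
    intro F f hmem htends
    apply Lapprox hwm hwb (L1.integrable_coeFn f)
    intro ε hε
    obtain ⟨k, hk⟩ : ∃ k, dist (F k) f < ε := by
      obtain ⟨k, hk⟩ := (Metric.tendsto_atTop.1 htends ε hε) |>.imp (fun _ h => h)
      exact ⟨k, by simpa using hk k le_rfl⟩
    refine ⟨F k, L1.integrable_coeFn (F k), ?_, hmem k⟩
    have : (∫ x, |(f : ℝ → ℝ) x - (F k : ℝ → ℝ) x| ∂ν) = dist (F k) f := by
      rw [L1.dist_eq_integral_dist]
      apply integral_congr_ae
      refine ae_of_all _ fun x => ?_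
      simp only [Real.dist_eq, abs_sub_comm]
    rw [this]
    exact hk.le
  · -- ae congruence
    intro f g hfg hf hPf
    apply hPf.congr
    intro n
    apply integral_congr_ae
    filter_upwards [hfg] with x hx
    rw [hx]

lemma oscMain (hμ : μ ∈ Set.Ioo (0:ℝ) 1)
    (hχ : ∀ x : ℝ, χ x = if Int.fract x ∈ Set.Ioo 0 μ then 1 else 0)
    {f : ℝ → ℝ} (hf : IntegrableOn f (Set.Ioo a b)) :
    Tendsto (fun n : ℕ => ∫ x in Set.Ioo a b, χ (n * x) * f x) atTop
      (𝓝 (μ * ∫ x in Set.Ioo a b, f x)) := by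
  have hmeas := chi_meas hχ
  have hbd := chi_bound hμ hχ
  have hint := chi_intInt hμ hmeas hbd
  have hzero : ∫ x in (0:ℝ)..1, (χ x - μ) = 0 := by
    have hχint : IntervalIntegrable χ volume 0 1 := by
      have := (hint 0 1).add (intervalIntegrable_const (c := μ))
      simpa using this
    rw [intervalIntegral.integral_sub hχint intervalIntegrable_const,
      chi_int01 hμ hχ]
    simp
  have hper : Function.Periodic (fun x => χ x - μ) 1 := fun x => by
    simp only [chi_per hχ x]
  have hGbd := Gbd hper hint hbd hzero
  have hA := claimA hint hGbd
  -- set versions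
  have hIoo : ∀ c d : ℝ, Tendsto (fun n : ℕ => ∫ x in Set.Ioo c d, (χ (n * x) - μ))
      atTop (𝓝 0) := by
    intro c d
    rcases le_or_gt d c with hdc | hcd
    · have : Set.Ioo c d = ∅ := Set.Ioo_eq_empty (by exact fun h => absurd hdc (not_le.2 h))
      simp only [this, Measure.restrict_empty, integral_zero_measure]
      exact tendsto_const_nhds
    · have heq : (fun n : ℕ => ∫ x in Set.Ioo c d, (χ (n * x) - μ))
          = fun n : ℕ => ∫ x in c..d, (χ (n * x) - μ) := by
        funext n
        rw [intervalIntegral.integral_of_le hcd.le, integral_Ioc_eq_integral_Ioo]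
      rw [heq]
      exact hA c d
  set w : ℕ → ℝ → ℝ := fun n x => χ (n * x) - μ with hw
  have hwm : ∀ n, Measurable (w n) :=
    fun n => (hmeas.comp (measurable_id.const_mul ((n:ℕ):ℝ))).sub measurable_const
  have hwb : ∀ n x, |w n x| ≤ 1 := fun n x => hbd _
  have hbase : ∀ p q : ℝ, Tendsto
      (fun n => ∫ x in Set.Ioo a b, w n x * Set.indicator (Set.Ioo p q) (fun _ => (1:ℝ)) x)
      atTop (𝓝 0) := by
    intro p q
    have heq : (fun n => ∫ x in Set.Ioo a b,
          w n x * Set.indicator (Set.Ioo p q) (fun _ => (1:ℝ)) x)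
        = fun n => ∫ x in Set.Ioo (max a p) (min b q), w n x := by
      funext n
      have hptw : ∀ x, w n x * Set.indicator (Set.Ioo p q) (fun _ => (1:ℝ)) x
          = Set.indicator (Set.Ioo p q) (fun y => w n y) x := by
        intro x
        by_cases h : x ∈ Set.Ioo p q <;> simp [h]
      rw [integral_congr_ae (ae_of_all _ hptw), setIntegral_indicator measurableSet_Ioo,
        Set.Ioo_inter_Ioo]
    rw [heq]
    exact hIoo _ _
  have huniv : Tendsto (fun n => ∫ x in Set.Ioo a b, w n x) atTop (𝓝 0) := hIoo a b
  have L := Lgen hwm hwb hbase huniv hf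
  have heq : (fun n : ℕ => ∫ x in Set.Ioo a b, χ (n * x) * f x)
      = fun n : ℕ => (∫ x in Set.Ioo a b, w n x * f x) + μ * ∫ x in Set.Ioo a b, f x := by
    funext n
    rw [← integral_const_mul, ← integral_add (hbint hwm hwb n hf) (hf.const_mul μ)]
    apply integral_congr_ae
    refine ae_of_all _ fun x => ?_
    simp only [hw]
    ring
  rw [heq]
  simpa using L.add tendsto_const_nhds
end osc

/-- The oscillating laminate construction: with `μ = |λ₁|/(|λ₁| + |λ₂|) ∈ (0,1)`,
`M = diag(λ₁, λ₂)` and `χ` the 1-periodic extension of the characteristic function of `(0, μ)`,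
the matrices `Mₙ(x) = χ(nx)(λ₁/μ) e₁⊗e₁ + (1 − χ(nx))(λ₂/(1−μ)) e₂⊗e₂` have zero determinant,
converge to `M` weakly-* in `L^∞` (tested against integrable matrix fields), and satisfy
`|Mₙ(x)|² = λ₁²/μ + λ₂²/(1−μ) = |M|² + 2|det M|` a.e. -/
theorem stmt17 (μ l₁ l₂ : ℝ) (hμ : μ ∈ Set.Ioo (0 : ℝ) 1) (hne : ¬(l₁ = 0 ∧ l₂ = 0))
    (hrel : μ = |l₁| / (|l₁| + |l₂|))
    (a b : ℝ) (hab : a < b) (I : Set ℝ) (hI : I = Set.Ioo a b)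
    (χ : ℝ → ℝ) (hχ : ∀ x : ℝ, χ x = if Int.fract x ∈ Set.Ioo 0 μ then 1 else 0)
    (M : Matrix (Fin 2) (Fin 2) ℝ) (hM : M = Matrix.diagonal ![l₁, l₂])
    (Mn : ℕ → ℝ → Matrix (Fin 2) (Fin 2) ℝ)
    (hMn : ∀ (n : ℕ) (x : ℝ), Mn n x =
      (χ (n * x) * (l₁ / μ)) • Matrix.single (0 : Fin 2) (0 : Fin 2) (1 : ℝ)
        + ((1 - χ (n * x)) * (l₂ / (1 - μ))) •
            Matrix.single (1 : Fin 2) (1 : Fin 2) (1 : ℝ)) :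
    (∀ (n : ℕ) (x : ℝ), (Mn n x).det = 0) ∧
    (∀ N : ℝ → Matrix (Fin 2) (Fin 2) ℝ,
      (∀ i j : Fin 2, Integrable (fun x => N x i j) (volume.restrict I)) →
      Filter.Tendsto (fun n => ∫ x in I, ∑ i, ∑ j, Mn n x i j * N x i j)
        Filter.atTop (nhds (∫ x in I, ∑ i, ∑ j, M i j * N x i j))) ∧
    (∀ n : ℕ, ∀ᵐ x ∂(volume.restrict I),
      (∑ i, ∑ j, (Mn n x i j) ^ 2) = l₁ ^ 2 / μ + l₂ ^ 2 / (1 - μ) ∧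
      (∑ i, ∑ j, (Mn n x i j) ^ 2) = (∑ i, ∑ j, (M i j) ^ 2) + 2 * |M.det|) := by
  subst hI hM
  have hμ0 : μ ≠ 0 := ne_of_gt hμ.1
  have hμ1 : (1:ℝ) - μ ≠ 0 := by have := hμ.2; intro h; linarith
  have hl₁ : l₁ ≠ 0 := by
    intro h
    rcases eq_or_ne l₂ 0 with h2 | h2
    · exact hne ⟨h, h2⟩
    · have : μ = 0 := by rw [hrel, h]; simp
      exact hμ0 this
  have hl₂ : l₂ ≠ 0 := by
    intro h
    have : μ = 1 := by
      rw [hrel, h]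
      simp [abs_ne_zero.2 hl₁]
    exact absurd hμ.2 (by rw [this]; exact lt_irrefl 1)
  set u := |l₁| with hu
  set v := |l₂| with hv
  have hu0 : 0 < u := abs_pos.2 hl₁
  have hv0 : 0 < v := abs_pos.2 hl₂
  have husq : u^2 = l₁^2 := sq_abs l₁
  have hvsq : v^2 = l₂^2 := sq_abs l₂
  have h1μ : 1 - μ = v / (u + v) := by rw [hrel]; field_simp; ring
  -- entry-level description
  have hentry : ∀ n x, (Mn n x 0 0 = χ (n*x) * (l₁/μ)) ∧ (Mn n x 1 1 = (1 - χ (n*x)) * (l₂/(1-μ)))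
      ∧ (Mn n x 0 1 = 0) ∧ (Mn n x 1 0 = 0) := by
    intro n x
    rw [hMn]
    refine ⟨?_, ?_, ?_, ?_⟩ <;>
      simp [Matrix.add_apply, Matrix.smul_apply, Matrix.single, Matrix.of_apply,
        smul_eq_mul]
  refine ⟨?_, ?_, ?_⟩
  · -- determinant
    intro n x
    obtain ⟨h00, h11, h01, h10⟩ := hentry n x
    rw [Matrix.det_fin_two, h00, h11, h01, h10]
    rcases chi_mem hχ (n*x) with h | h <;> rw [h] <;> ring
  · -- weak-* convergence
    intro N hN
    set A : ℝ → ℝ := fun x => N x 0 0 with hA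
    set B : ℝ → ℝ := fun x => N x 1 1 with hB
    have hAi : IntegrableOn A (Set.Ioo a b) := hN 0 0
    have hBi : IntegrableOn B (Set.Ioo a b) := hN 1 1
    have hTA := oscMain (a := a) (b := b) hμ hχ hAi
    have hTB := oscMain (a := a) (b := b) hμ hχ hBi
    have hmul : ∀ (n : ℕ) (g : ℝ → ℝ), IntegrableOn g (Set.Ioo a b) →
        Integrable (fun x => χ (n * x) * g x) (volume.restrict (Set.Ioo a b)) := by
      intro n g hg
      refine hg.bdd_mul (c := 1) ((chi_meas hχ).comp
        (measurable_id.const_mul ((n:ℕ):ℝ))).aestronglyMeasurable (ae_of_all _ fun x => ?_)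
      rcases chi_mem hχ (n*x) with h | h <;> rw [h] <;> norm_num
    have heqfun : (fun n : ℕ => ∫ x in Set.Ioo a b, ∑ i, ∑ j, Mn n x i j * N x i j)
        = fun n : ℕ => (l₁/μ) * (∫ x in Set.Ioo a b, χ (n*x) * A x)
          + (l₂/(1-μ)) * ((∫ x in Set.Ioo a b, B x) - ∫ x in Set.Ioo a b, χ (n*x) * B x) := by
      funext n
      have e1 : (∫ x in Set.Ioo a b, ∑ i, ∑ j, Mn n x i j * N x i j)
          = ∫ x in Set.Ioo a b,
            ((l₁/μ) * (χ (n*x) * A x) + (l₂/(1-μ)) * (B x - χ (n*x) * B x)) := by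
        apply integral_congr_ae
        refine ae_of_all _ fun x => ?_
        obtain ⟨h00, h11, h01, h10⟩ := hentry n x
        simp only [Fin.sum_univ_two, h00, h11, h01, h10, hA, hB]
        ring
      have i1 : Integrable (fun x => (l₁/μ) * (χ (n*x) * A x))
          (volume.restrict (Set.Ioo a b)) := (hmul n A hAi).const_mul _
      have i2 : Integrable (fun x => (l₂/(1-μ)) * (B x - χ (n*x) * B x))
          (volume.restrict (Set.Ioo a b)) := (hBi.sub (hmul n B hBi)).const_mul _
      have e2 : (∫ x in Set.Ioo a b,
            ((l₁/μ) * (χ (n*x) * A x) + (l₂/(1-μ)) * (B x - χ (n*x) * B x)))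
          = (∫ x in Set.Ioo a b, (l₁/μ) * (χ (n*x) * A x))
            + ∫ x in Set.Ioo a b, (l₂/(1-μ)) * (B x - χ (n*x) * B x) :=
        integral_add i1 i2
      have e3 : (∫ x in Set.Ioo a b, (l₁/μ) * (χ (n*x) * A x))
          = (l₁/μ) * ∫ x in Set.Ioo a b, χ (n*x) * A x := integral_const_mul _ _
      have e4 : (∫ x in Set.Ioo a b, (l₂/(1-μ)) * (B x - χ (n*x) * B x))
          = (l₂/(1-μ)) * ∫ x in Set.Ioo a b, (B x - χ (n*x) * B x) := integral_const_mul _ _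
      have e5 : (∫ x in Set.Ioo a b, (B x - χ (n*x) * B x))
          = (∫ x in Set.Ioo a b, B x) - ∫ x in Set.Ioo a b, χ (n*x) * B x :=
        integral_sub hBi (hmul n B hBi)
      rw [e1, e2, e3, e4, e5]
    have htarget : (∫ x in Set.Ioo a b, ∑ i, ∑ j, (Matrix.diagonal ![l₁, l₂]) i j * N x i j)
        = l₁ * (∫ x in Set.Ioo a b, A x) + l₂ * ∫ x in Set.Ioo a b, B x := by
      have e1 : (∫ x in Set.Ioo a b, ∑ i, ∑ j, (Matrix.diagonal ![l₁, l₂]) i j * N x i j)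
          = ∫ x in Set.Ioo a b, (l₁ * A x + l₂ * B x) := by
        apply integral_congr_ae
        refine ae_of_all _ fun x => ?_
        simp only [Fin.sum_univ_two]
        simp [Matrix.diagonal, hA, hB]
      have e2 : (∫ x in Set.Ioo a b, (l₁ * A x + l₂ * B x))
          = (∫ x in Set.Ioo a b, l₁ * A x) + ∫ x in Set.Ioo a b, l₂ * B x :=
        integral_add (hAi.const_mul _) (hBi.const_mul _)
      have e3 : (∫ x in Set.Ioo a b, l₁ * A x) = l₁ * ∫ x in Set.Ioo a b, A x :=
        integral_const_mul _ _
      have e4 : (∫ x in Set.Ioo a b, l₂ * B x) = l₂ * ∫ x in Set.Ioo a b, B x :=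
        integral_const_mul _ _
      rw [e1, e2, e3, e4]
    rw [heqfun, htarget]
    have hT1 : Filter.Tendsto (fun n : ℕ => (l₁/μ) * ∫ x in Set.Ioo a b, χ (n*x) * A x)
        Filter.atTop (𝓝 ((l₁/μ) * (μ * ∫ x in Set.Ioo a b, A x))) := hTA.const_mul _
    have hT2 : Filter.Tendsto (fun n : ℕ => (l₂/(1-μ)) *
          ((∫ x in Set.Ioo a b, B x) - ∫ x in Set.Ioo a b, χ (n*x) * B x))
        Filter.atTop (𝓝 ((l₂/(1-μ)) * ((∫ x in Set.Ioo a b, B x)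
          - μ * ∫ x in Set.Ioo a b, B x))) := (tendsto_const_nhds.sub hTB).const_mul _
    have := hT1.add hT2
    convert this using 2
    field_simp
  · -- a.e. identity
    intro n
    refine ae_of_all _ fun x => ?_
    obtain ⟨h00, h11, h01, h10⟩ := hentry n x
    have hsum : (∑ i, ∑ j, (Mn n x i j) ^ 2)
        = (χ (n*x) * (l₁/μ))^2 + ((1 - χ (n*x)) * (l₂/(1-μ)))^2 := by
      rw [Fin.sum_univ_two, Fin.sum_univ_two, Fin.sum_univ_two, h00, h11, h01, h10]
      ring
    have hMsum : (∑ i, ∑ j, ((Matrix.diagonal ![l₁, l₂]) i j) ^ 2) = l₁^2 + l₂^2 := by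
      rw [Fin.sum_univ_two, Fin.sum_univ_two, Fin.sum_univ_two]
      simp [Matrix.diagonal]
    have hdet : |(Matrix.diagonal ![l₁, l₂]).det| = u * v := by
      rw [Matrix.det_fin_two]
      simp [Matrix.diagonal, abs_mul, hu, hv]
    have hK : l₁^2/μ + l₂^2/(1-μ) = (u+v)^2 := by
      rw [h1μ, hrel, ← husq, ← hvsq]
      field_simp
    have hone : (l₁/μ)^2 = (u+v)^2 := by
      rw [hrel, div_div_eq_mul_div, div_pow, mul_pow, ← husq]
      field_simp
    have htwo : (l₂/(1-μ))^2 = (u+v)^2 := by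
      rw [h1μ, div_div_eq_mul_div, div_pow, mul_pow, ← hvsq]
      field_simp
    have hval : (∑ i, ∑ j, (Mn n x i j) ^ 2) = (u+v)^2 := by
      rw [hsum]
      rcases chi_mem hχ (n*x) with h | h
      · simp only [h, zero_mul, sub_zero, one_mul, ne_eq, OfNat.ofNat_ne_zero,
          not_false_eq_true, zero_pow, zero_add]
        exact htwo
      · simp only [h, one_mul, sub_self, zero_mul, ne_eq, OfNat.ofNat_ne_zero,
          not_false_eq_true, zero_pow, add_zero]
        exact hone
    constructor
    · rw [hval, hK]
    · rw [hval, hMsum, hdet, ← husq, ← hvsq]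
      ring
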